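/- Suppose there exists ε > 0 such that for every t ≥ 1 and every eigenvalue λ_i of A, the smallest singular value of B_{λ_i}^{(t)} is at least ε. Let v ∈ ℝⁿ be a unit vector, and let ν_q be a unit eigenvector of A with ν_qᵀ·v = 0 and ‖ν_qᵀ·X^{(0)}‖₂ = c > 0. Then ‖X^{(t)} − v·vᵀ·X^{(t)}‖_F ≥ c·ε/√k for all t ≥ 1. -/
import Mathlib


open Matrix Finset

/-- The matrix `B_λ^{(t)} = Σ_{m=0}^{t−1} α·(1−α)^m·λ^m·W₂^{(t−1−m)}·W₁^{(t−m)}···W₁^{(t−1)}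
+ (1−α)^t·λ^t·W₁^{(0)}···W₁^{(t−1)}` (ordered products; empty products are `I_k`). -/
noncomputable def Bmat {k : ℕ} (α : ℝ) (W₁ W₂ : ℕ → Matrix (Fin k) (Fin k) ℝ)
    (lam : ℝ) (t : ℕ) : Matrix (Fin k) (Fin k) ℝ :=
  (∑ m ∈ Finset.range t,
      (α * (1 - α) ^ m * lam ^ m) •
        (W₂ (t - 1 - m) * ((List.range' (t - m) m).map W₁).prod))
    + ((1 - α) ^ t * lam ^ t) • ((List.range' 0 t).map W₁).prod

lemma Bmat_zero {k : ℕ} (α : ℝ) (W₁ W₂ : ℕ → Matrix (Fin k) (Fin k) ℝ) (lam : ℝ) :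
    Bmat α W₁ W₂ lam 0 = 1 := by
  simp [Bmat]

lemma Bmat_succ {k : ℕ} (α : ℝ) (W₁ W₂ : ℕ → Matrix (Fin k) (Fin k) ℝ)
    (lam : ℝ) (t : ℕ) :
    Bmat α W₁ W₂ lam (t + 1)
      = ((1 - α) * lam) • (Bmat α W₁ W₂ lam t * W₁ t) + α • W₂ t := by
  unfold Bmat
  rw [Finset.sum_range_succ']
  have hsum : ∀ m ∈ Finset.range t,
      (α * (1 - α) ^ (m + 1) * lam ^ (m + 1)) •
          (W₂ (t + 1 - 1 - (m + 1)) * ((List.range' (t + 1 - (m + 1)) (m + 1)).map W₁).prod)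
        = ((1 - α) * lam) •
            (((α * (1 - α) ^ m * lam ^ m) •
              (W₂ (t - 1 - m) * ((List.range' (t - m) m).map W₁).prod)) * W₁ t) := by
    intro m hm
    have hm' : m < t := Finset.mem_range.mp hm
    have h1 : t + 1 - 1 - (m + 1) = t - 1 - m := by omega
    have h2 : t + 1 - (m + 1) = t - m := by omega
    have h3 : List.range' (t - m) (m + 1) = List.range' (t - m) m ++ [t] := by
      rw [List.range'_concat]
      congr 2
      omega
    rw [h1, h2, h3, List.map_append, List.prod_append, smul_mul_assoc, smul_smul, ← mul_assoc]
    simp only [List.map_cons, List.map_nil, List.prod_cons, List.prod_nil, mul_one]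
    congr 1
    ring
  rw [Finset.sum_congr rfl hsum]
  have hP : ((1 - α) ^ (t + 1) * lam ^ (t + 1)) • ((List.range' 0 (t + 1)).map W₁).prod
      = ((1 - α) * lam) •
          ((((1 - α) ^ t * lam ^ t) • ((List.range' 0 t).map W₁).prod) * W₁ t) := by
    have h4 : List.range' 0 (t + 1) = List.range' 0 t ++ [t] := by
      rw [List.range'_concat]
      congr 2
      omega
    rw [h4, List.map_append, List.prod_append, smul_mul_assoc, smul_smul, ← mul_assoc]
    simp only [List.map_cons, List.map_nil, List.prod_cons, List.prod_nil, mul_one]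
    congr 1
    ring
  rw [hP, add_mul, smul_add, ← Finset.smul_sum, ← Finset.sum_mul]
  simp only [pow_zero, mul_one, Nat.add_sub_cancel, Nat.sub_zero, List.range', List.map_nil,
    List.prod_nil]
  abel

lemma vecMul_smul_mat {m n : ℕ} (c : ℝ) (M : Matrix (Fin m) (Fin n) ℝ) (v : Fin m → ℝ) :
    v ᵥ* (c • M) = c • (v ᵥ* M) := by
  ext j
  simp [Matrix.vecMul, dotProduct, Finset.mul_sum, mul_left_comm]

lemma sigma_min_vecMul {k : ℕ} (B : Matrix (Fin k) (Fin k) ℝ) (ε : ℝ) (hε : 0 < ε)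
    (h : ∀ x : Fin k → ℝ, ε * Real.sqrt (∑ j, x j ^ 2) ≤ Real.sqrt (∑ j, (B *ᵥ x) j ^ 2))
    (y : Fin k → ℝ) :
    ε * Real.sqrt (∑ j, y j ^ 2) ≤ Real.sqrt (∑ j, (y ᵥ* B) j ^ 2) := by
  by_cases hy : y = 0
  · simp [hy]
  have hinj : Function.Injective B.mulVec := by
    have hker : ∀ x : Fin k → ℝ, B *ᵥ x = 0 → x = 0 := by
      intro x hx
      have h1 := h x
      rw [hx] at h1
      simp only [Pi.zero_apply, ne_eq, OfNat.ofNat_ne_zero, not_false_eq_true, zero_pow,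
        Finset.sum_const_zero, Real.sqrt_zero] at h1
      have h2 : Real.sqrt (∑ j, x j ^ 2) ≤ 0 := by
        nlinarith [Real.sqrt_nonneg (∑ j, x j ^ 2)]
      have h3 : (∑ j, x j ^ 2) = 0 := by
        have h5 : (0:ℝ) ≤ ∑ j, x j ^ 2 := Finset.sum_nonneg fun j _ => sq_nonneg _
        have h4 : Real.sqrt (∑ j, x j ^ 2) = 0 := le_antisymm h2 (Real.sqrt_nonneg _)
        nlinarith [Real.sq_sqrt h5]
      funext j
      have := (Finset.sum_eq_zero_iff_of_nonneg (fun j _ => sq_nonneg (x j))).mp h3 j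
        (Finset.mem_univ j)
      exact pow_eq_zero_iff (n := 2) (by norm_num) |>.mp this
    intro a b hab
    have hs : B *ᵥ (a - b) = 0 := by
      rw [Matrix.mulVec_sub, hab, sub_self]
    exact sub_eq_zero.mp (hker _ hs)
  have hU : IsUnit B := Matrix.mulVec_injective_iff_isUnit.mp hinj
  set x : Fin k → ℝ := B⁻¹ *ᵥ y with hxdef
  have hBx : B *ᵥ x = y := by
    rw [hxdef, Matrix.mulVec_mulVec,
      Matrix.mul_nonsing_inv _ ((Matrix.isUnit_iff_isUnit_det B).mp hU), Matrix.one_mulVec]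
  set ny := Real.sqrt (∑ j, y j ^ 2) with hny
  set nx := Real.sqrt (∑ j, x j ^ 2) with hnx
  set nz := Real.sqrt (∑ j, (y ᵥ* B) j ^ 2) with hnz
  have hny0 : 0 < ny := by
    rw [hny]
    apply Real.sqrt_pos.mpr
    rcases Function.ne_iff.mp hy with ⟨j, hj⟩
    have : 0 < y j ^ 2 := (sq_nonneg _).lt_of_ne (Ne.symm (pow_ne_zero 2 hj))
    exact Finset.sum_pos' (fun i _ => sq_nonneg _) ⟨j, Finset.mem_univ j, this⟩
  have hεx : ε * nx ≤ ny := by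
    have := h x
    rw [hBx] at this
    exact this
  have hCS : (y ᵥ* B) ⬝ᵥ x ≤ nz * nx := by
    have h1 : ((y ᵥ* B) ⬝ᵥ x) ^ 2 ≤ (∑ j, (y ᵥ* B) j ^ 2) * (∑ j, x j ^ 2) :=
      Finset.sum_mul_sq_le_sq_mul_sq _ _ _
    calc (y ᵥ* B) ⬝ᵥ x ≤ Real.sqrt (((y ᵥ* B) ⬝ᵥ x) ^ 2) := by
          rw [Real.sqrt_sq_eq_abs]; exact le_abs_self _
      _ ≤ Real.sqrt ((∑ j, (y ᵥ* B) j ^ 2) * (∑ j, x j ^ 2)) := Real.sqrt_le_sqrt h1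
      _ = nz * nx := by
          rw [Real.sqrt_mul (Finset.sum_nonneg fun j _ => sq_nonneg _)]
  have hyy : ny ^ 2 = y ⬝ᵥ y := by
    rw [hny, Real.sq_sqrt (Finset.sum_nonneg fun j _ => sq_nonneg _)]
    simp [dotProduct, sq]
  have hdot : y ⬝ᵥ y = (y ᵥ* B) ⬝ᵥ x := by
    rw [← Matrix.dotProduct_mulVec, hBx]
  have hnz0 : 0 ≤ nz := Real.sqrt_nonneg _
  have key : ε * ny * ny ≤ nz * ny := by
    have he : ε * ny * ny = ε * (y ⬝ᵥ y) := by rw [← hyy]; ring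
    rw [he, hdot]
    calc ε * ((y ᵥ* B) ⬝ᵥ x) ≤ ε * (nz * nx) := mul_le_mul_of_nonneg_left hCS hε.le
      _ = nz * (ε * nx) := by ring
      _ ≤ nz * ny := mul_le_mul_of_nonneg_left hεx hnz0
  exact le_of_mul_le_mul_right key hny0

lemma row_proj_le_frobenius {n k : ℕ} (u : Fin n → ℝ) (hu : ∑ r, u r ^ 2 = 1)
    (M : Matrix (Fin n) (Fin k) ℝ) :
    ∑ j, (u ᵥ* M) j ^ 2 ≤ ∑ r, ∑ j, M r j ^ 2 := by
  rw [Finset.sum_comm]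
  apply Finset.sum_le_sum
  intro j _
  have : (u ᵥ* M) j = ∑ r, u r * M r j := by
    simp [Matrix.vecMul, dotProduct]
  rw [this]
  calc (∑ r, u r * M r j) ^ 2 ≤ (∑ r, u r ^ 2) * (∑ r, M r j ^ 2) :=
        Finset.sum_mul_sq_le_sq_mul_sq _ _ _
    _ = ∑ r, M r j ^ 2 := by rw [hu, one_mul]


/-- For the linear residual GNN: if for some `ε > 0` the smallest singular
value of every `B_{λ_i}^{(t)}` (for `t ≥ 1` and every eigenvalue `λ_i` of `A`) is at least `ε`
(encoded as `‖B_{λ_i}^{(t)}·x‖₂ ≥ ε·‖x‖₂` for all `x`), `v` is a unit vector, and `ν_q` is a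
unit eigenvector of `A` orthogonal to `v` with `‖ν_qᵀ·X^{(0)}‖₂ = c > 0`, then
`‖X^{(t)} − v·vᵀ·X^{(t)}‖_F ≥ c·ε/√k` for all `t ≥ 1`. -/
theorem stmt_8 {n k : ℕ}
    (A : Matrix (Fin n) (Fin n) ℝ) (hA : A.IsSymm)
    (α : ℝ) (hα : α ∈ Set.Ioo (0 : ℝ) 1)
    (X0 : Matrix (Fin n) (Fin k) ℝ)
    (W₁ W₂ : ℕ → Matrix (Fin k) (Fin k) ℝ)
    (X : ℕ → Matrix (Fin n) (Fin k) ℝ)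
    (hX0 : X 0 = X0)
    (hXrec : ∀ t, X (t + 1) = (1 - α) • (A * X t * W₁ t) + α • (X0 * W₂ t))
    -- an orthonormal eigenbasis of the symmetric matrix `A`
    (lam : Fin n → ℝ) (ν : Fin n → Fin n → ℝ)
    (heig : ∀ i, A *ᵥ ν i = lam i • ν i)
    (horth : ∀ i j, ν i ⬝ᵥ ν j = if i = j then (1 : ℝ) else 0)
    -- the smallest singular value of every `B_{λ_i}^{(t)}` is at least `ε`
    (ε : ℝ) (hε : 0 < ε)
    (hB : ∀ t, 1 ≤ t → ∀ (i : Fin n) (x : Fin k → ℝ),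
      ε * Real.sqrt (∑ j, x j ^ 2)
        ≤ Real.sqrt (∑ j, ((Bmat α W₁ W₂ (lam i) t) *ᵥ x) j ^ 2))
    (v : Fin n → ℝ) (hv : Real.sqrt (∑ r, v r ^ 2) = 1)
    (q : Fin n) (hqv : ν q ⬝ᵥ v = 0)
    (c : ℝ) (hc : 0 < c)
    (hc0 : Real.sqrt (∑ j, (ν q ᵥ* X0) j ^ 2) = c) :
    ∀ t, 1 ≤ t →
      c * ε / Real.sqrt k
        ≤ Real.sqrt (∑ r, ∑ j,
            ((X t - (Matrix.of fun a b => v a * v b) * X t) r j) ^ 2) := by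
  -- eigen relation for row multiplication
  have hνA : ν q ᵥ* A = lam q • ν q := by
    have := Matrix.vecMul_transpose A (ν q)
    rw [hA] at this
    rw [this, heig]
  -- key induction
  have key : ∀ t, ν q ᵥ* X t = (ν q ᵥ* X0) ᵥ* Bmat α W₁ W₂ (lam q) t := by
    intro t
    induction t with
    | zero => rw [hX0, Bmat_zero, Matrix.vecMul_one]
    | succ t ih =>
        calc ν q ᵥ* X (t + 1)
            = (1 - α) • (ν q ᵥ* (A * X t * W₁ t)) + α • (ν q ᵥ* (X0 * W₂ t)) := by
              rw [hXrec, Matrix.vecMul_add, vecMul_smul_mat, vecMul_smul_mat]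
          _ = (1 - α) • (lam q • ((ν q ᵥ* X t) ᵥ* W₁ t))
                + α • ((ν q ᵥ* X0) ᵥ* W₂ t) := by
              rw [← Matrix.vecMul_vecMul (ν q) (A * X t) (W₁ t),
                ← Matrix.vecMul_vecMul (ν q) A (X t), hνA, Matrix.smul_vecMul,
                Matrix.smul_vecMul, ← Matrix.vecMul_vecMul (ν q) X0 (W₂ t)]
          _ = ((1 - α) * lam q) •
                (((ν q ᵥ* X0) ᵥ* Bmat α W₁ W₂ (lam q) t) ᵥ* W₁ t)
                + α • ((ν q ᵥ* X0) ᵥ* W₂ t) := by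
              rw [ih, smul_smul]
          _ = (ν q ᵥ* X0) ᵥ* Bmat α W₁ W₂ (lam q) (t + 1) := by
              rw [Bmat_succ, Matrix.vecMul_add, vecMul_smul_mat, vecMul_smul_mat,
                Matrix.vecMul_vecMul]
  intro t ht
  -- the projection kills nothing in row ν q
  have hrow : ν q ᵥ* (X t - (Matrix.of fun a b => v a * v b) * X t) = ν q ᵥ* X t := by
    rw [Matrix.vecMul_sub, ← Matrix.vecMul_vecMul (ν q)]
    have hz : ν q ᵥ* (Matrix.of fun a b => v a * v b) = 0 := by
      funext b
      have : (ν q ᵥ* (Matrix.of fun a b => v a * v b)) b = (∑ a, ν q a * v a) * v b := by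
        simp [Matrix.vecMul, dotProduct, Finset.sum_mul, mul_assoc]
      rw [this]
      have : (∑ a, ν q a * v a) = 0 := hqv
      rw [this, zero_mul]
      rfl
    rw [hz, Matrix.zero_vecMul, sub_zero]
  -- norms
  have hunit : ∑ r, ν q r ^ 2 = 1 := by
    have h := horth q q
    simp only [if_true, eq_self_iff_true] at h
    rw [← h]
    simp [dotProduct, sq]
  have hεc : ε * c ≤ Real.sqrt (∑ j, (ν q ᵥ* X t) j ^ 2) := by
    rw [key t]
    have := sigma_min_vecMul (Bmat α W₁ W₂ (lam q) t) ε hε (hB t ht q) (ν q ᵥ* X0)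
    rwa [hc0] at this
  have hfro : Real.sqrt (∑ j, (ν q ᵥ* X t) j ^ 2)
      ≤ Real.sqrt (∑ r, ∑ j,
          ((X t - (Matrix.of fun a b => v a * v b) * X t) r j) ^ 2) := by
    apply Real.sqrt_le_sqrt
    rw [← hrow]
    exact row_proj_le_frobenius (ν q) hunit _
  -- k ≥ 1
  have hk : 1 ≤ k := by
    by_contra hk
    have hk0 : k = 0 := by omega
    subst hk0
    simp at hc0
    exact hc.ne' hc0.symm
  have h1k : (1 : ℝ) ≤ Real.sqrt k := by
    rw [show (1 : ℝ) = Real.sqrt 1 from Real.sqrt_one.symm]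
    exact Real.sqrt_le_sqrt (by exact_mod_cast hk)
  have hdiv : c * ε / Real.sqrt k ≤ c * ε :=
    div_le_self (by positivity) h1k
  calc c * ε / Real.sqrt k ≤ c * ε := hdiv
    _ = ε * c := mul_comm _ _
    _ ≤ Real.sqrt (∑ j, (ν q ᵥ* X t) j ^ 2) := hεc
    _ ≤ _ := hfro
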